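/- Let R be a commutative ring, n ≥ 0 and ℓ ≥ 1 natural numbers, and let L₁,…,L_ℓ and P₁,…,P_ℓ be homogeneous polynomials of degree 1 in the polynomial ring R[X₀,…,X_n]. Then there exists an ℓ×ℓ matrix M, all of whose entries are homogeneous polynomials of degree 1 in R[X₀,…,X_n], such that det M = L₁⋯L_ℓ + P₁⋯P_ℓ. -/
import Mathlib


open MvPolynomial

lemma aux_det_bidiag {S : Type*} [CommRing S] (m : ℕ)
    (L P : Fin (m + 2) → S) :
    (Matrix.of fun i j : Fin (m + 2) =>
        if i = j then L i
        else if (j : ℕ) = (i : ℕ) + 1 then -(P i)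
        else if i = Fin.last (m + 1) ∧ j = 0 then P (Fin.last (m + 1))
        else 0).det = (∏ i, L i) + ∏ i, P i := by
  set A : Matrix (Fin (m + 2)) (Fin (m + 2)) S :=
    Matrix.of fun i j : Fin (m + 2) =>
        if i = j then L i
        else if (j : ℕ) = (i : ℕ) + 1 then -(P i)
        else if i = Fin.last (m + 1) ∧ j = 0 then P (Fin.last (m + 1))
        else 0 with hA
  rw [Matrix.det_succ_column_zero]
  have hzero : ∀ i ∈ Finset.univ,
      i ∉ ({0, Fin.last (m + 1)} : Finset (Fin (m + 2))) →
      (-1 : S) ^ (i : ℕ) * A i 0 * (A.submatrix i.succAbove Fin.succ).det = 0 := by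
    intro i _ hi
    simp only [Finset.mem_insert, Finset.mem_singleton, not_or] at hi
    have e1 : ¬ (i = (0 : Fin (m + 2))) := hi.1
    have e2 : ¬ ((0 : Fin (m + 2)) : ℕ) = (i : ℕ) + 1 := by simp
    have e3 : ¬ (i = Fin.last (m + 1) ∧ (0 : Fin (m + 2)) = 0) := fun h => hi.2 h.1
    have h1 : A i 0 = 0 := by
      show (if i = 0 then L i else if ((0 : Fin (m+2)) : ℕ) = (i : ℕ) + 1 then -(P i)
        else if i = Fin.last (m + 1) ∧ (0 : Fin (m+2)) = 0 then P (Fin.last (m + 1)) else 0) = 0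
      rw [if_neg e1, if_neg e2, if_neg e3]
    rw [h1, mul_zero, zero_mul]
  rw [← Finset.sum_subset (Finset.subset_univ {0, Fin.last (m + 1)}) hzero]
  have hne : (0 : Fin (m + 2)) ≠ Fin.last (m + 1) := by
    intro h
    have := congrArg (Fin.val) h
    simp [Fin.last] at this
  rw [Finset.sum_pair hne]
  -- first term
  have hB : (A.submatrix (Fin.succAbove 0) Fin.succ).det = ∏ j : Fin (m + 1), L j.succ := by
    have htri : (A.submatrix (Fin.succAbove 0) Fin.succ).BlockTriangular id := by
      intro j k hjk
      have hjk' : k < j := hjk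
      have e1 : ¬ ((j.succ : Fin (m + 2)) = k.succ) := by
        intro h
        exact absurd (Fin.succ_injective _ h) (ne_of_gt hjk')
      have e2 : ¬ ((k.succ : Fin (m + 2)) : ℕ) = ((j.succ : Fin (m + 2)) : ℕ) + 1 := by
        simp only [Fin.val_succ]
        have : (k : ℕ) < (j : ℕ) := hjk'
        omega
      have e3 : ¬ ((j.succ : Fin (m + 2)) = Fin.last (m + 1) ∧ (k.succ : Fin (m + 2)) = 0) :=
        fun h => Fin.succ_ne_zero k h.2
      show A ((0 : Fin (m+2)).succAbove j) k.succ = 0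
      rw [Fin.succAbove_zero]
      show (if (j.succ : Fin (m+2)) = k.succ then L j.succ
        else if ((k.succ : Fin (m+2)) : ℕ) = ((j.succ : Fin (m+2)) : ℕ) + 1 then -(P j.succ)
        else if (j.succ : Fin (m+2)) = Fin.last (m + 1) ∧ (k.succ : Fin (m+2)) = 0
        then P (Fin.last (m + 1)) else 0) = 0
      rw [if_neg e1, if_neg e2, if_neg e3]
    rw [Matrix.det_of_upperTriangular htri]
    apply Finset.prod_congr rfl
    intro j _
    show A ((0 : Fin (m+2)).succAbove j) j.succ = L j.succ
    rw [Fin.succAbove_zero]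
    show (if (j.succ : Fin (m+2)) = j.succ then L j.succ
        else if ((j.succ : Fin (m+2)) : ℕ) = ((j.succ : Fin (m+2)) : ℕ) + 1 then -(P j.succ)
        else if (j.succ : Fin (m+2)) = Fin.last (m + 1) ∧ (j.succ : Fin (m+2)) = 0
        then P (Fin.last (m + 1)) else 0) = L j.succ
    rw [if_pos rfl]
  -- second term
  have hC : (A.submatrix (Fin.succAbove (Fin.last (m + 1))) Fin.succ).det =
      ∏ j : Fin (m + 1), -(P j.castSucc) := by
    have htri : (A.submatrix (Fin.succAbove (Fin.last (m + 1))) Fin.succ).BlockTriangular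
        OrderDual.toDual := by
      intro j k hjk
      have hjk' : j < k := hjk
      have hjk'' : (j : ℕ) < (k : ℕ) := hjk'
      have e1 : ¬ ((j.castSucc : Fin (m + 2)) = k.succ) := by
        intro h
        have := congrArg Fin.val h
        simp only [Fin.coe_castSucc, Fin.val_succ] at this
        omega
      have e2 : ¬ ((k.succ : Fin (m + 2)) : ℕ) = ((j.castSucc : Fin (m + 2)) : ℕ) + 1 := by
        simp only [Fin.val_succ, Fin.coe_castSucc]
        omega
      have e3 : ¬ ((j.castSucc : Fin (m + 2)) = Fin.last (m + 1) ∧ (k.succ : Fin (m + 2)) = 0) :=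
        fun h => (ne_of_lt (Fin.castSucc_lt_last j)) h.1
      show A ((Fin.last (m+1)).succAbove j) k.succ = 0
      rw [Fin.succAbove_last]
      show (if (j.castSucc : Fin (m+2)) = k.succ then L j.castSucc
        else if ((k.succ : Fin (m+2)) : ℕ) = ((j.castSucc : Fin (m+2)) : ℕ) + 1 then -(P j.castSucc)
        else if (j.castSucc : Fin (m+2)) = Fin.last (m + 1) ∧ (k.succ : Fin (m+2)) = 0
        then P (Fin.last (m + 1)) else 0) = 0
      rw [if_neg e1, if_neg e2, if_neg e3]
    rw [Matrix.det_of_lowerTriangular _ htri]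
    apply Finset.prod_congr rfl
    intro j _
    have e1 : ¬ ((j.castSucc : Fin (m + 2)) = j.succ) := by
      intro h
      have := congrArg Fin.val h
      simp at this
    have e2 : ((j.succ : Fin (m + 2)) : ℕ) = ((j.castSucc : Fin (m + 2)) : ℕ) + 1 := by
      simp
    show A ((Fin.last (m+1)).succAbove j) j.succ = -(P j.castSucc)
    rw [Fin.succAbove_last]
    show (if (j.castSucc : Fin (m+2)) = j.succ then L j.castSucc
        else if ((j.succ : Fin (m+2)) : ℕ) = ((j.castSucc : Fin (m+2)) : ℕ) + 1 then -(P j.castSucc)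
        else if (j.castSucc : Fin (m+2)) = Fin.last (m + 1) ∧ (j.succ : Fin (m+2)) = 0
        then P (Fin.last (m + 1)) else 0) = -(P j.castSucc)
    rw [if_neg e1, if_pos e2]
  have hA00 : A 0 0 = L 0 := by
    show (if (0 : Fin (m+2)) = 0 then L 0 else if ((0 : Fin (m+2)) : ℕ) = ((0 : Fin (m+2)) : ℕ) + 1
      then -(P 0) else if (0 : Fin (m+2)) = Fin.last (m + 1) ∧ (0 : Fin (m+2)) = 0
      then P (Fin.last (m + 1)) else 0) = L 0
    rw [if_pos rfl]
  have hAl0 : A (Fin.last (m + 1)) 0 = P (Fin.last (m + 1)) := by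
    have e1 : ¬ ((Fin.last (m + 1) : Fin (m + 2)) = 0) := Ne.symm hne
    have e2 : ¬ ((0 : Fin (m + 2)) : ℕ) = ((Fin.last (m + 1) : Fin (m + 2)) : ℕ) + 1 := by simp
    show (if (Fin.last (m+1) : Fin (m+2)) = 0 then L (Fin.last (m+1))
      else if ((0 : Fin (m+2)) : ℕ) = ((Fin.last (m+1) : Fin (m+2)) : ℕ) + 1 then -(P (Fin.last (m+1)))
      else if (Fin.last (m+1) : Fin (m+2)) = Fin.last (m + 1) ∧ (0 : Fin (m+2)) = 0
      then P (Fin.last (m + 1)) else 0) = P (Fin.last (m+1))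
    rw [if_neg e1, if_neg e2, if_pos ⟨rfl, rfl⟩]
  rw [hB, hC, hA00, hAl0]
  have hprodneg : (∏ j : Fin (m + 1), -(P j.castSucc)) =
      (-1 : S) ^ (m + 1) * ∏ j : Fin (m + 1), P j.castSucc := by
    have h : ∀ j : Fin (m + 1), -(P j.castSucc) = (-1 : S) * P j.castSucc :=
      fun j => (neg_one_mul _).symm
    simp only [h, Finset.prod_mul_distrib, Finset.prod_const, Finset.card_univ,
      Fintype.card_fin]
  rw [hprodneg]
  have hlast : ((Fin.last (m + 1) : Fin (m + 2)) : ℕ) = m + 1 := rfl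
  rw [hlast]
  have hsq : ((-1 : S) ^ (m + 1)) * ((-1 : S) ^ (m + 1)) = 1 := by
    rw [← pow_add, ← two_mul, pow_mul]
    simp
  rw [Fin.prod_univ_succ (fun i => L i), Fin.prod_univ_castSucc (fun i => P i)]
  simp only [Fin.val_zero, pow_zero, one_mul]
  calc L 0 * ∏ j : Fin (m + 1), L j.succ +
      (-1 : S) ^ (m + 1) * P (Fin.last (m + 1)) *
        ((-1 : S) ^ (m + 1) * ∏ j : Fin (m + 1), P j.castSucc)
      = L 0 * ∏ j : Fin (m + 1), L j.succ +
        ((-1 : S) ^ (m + 1) * (-1 : S) ^ (m + 1)) *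
          ((∏ j : Fin (m + 1), P j.castSucc) * P (Fin.last (m + 1))) := by ring
    _ = L 0 * ∏ j : Fin (m + 1), L j.succ +
        (∏ j : Fin (m + 1), P j.castSucc) * P (Fin.last (m + 1)) := by rw [hsq, one_mul]

/-- A sum of two products of linear forms is the determinant of a matrix of
linear forms. -/
theorem det_of_sum_of_products_of_linear_forms (R : Type*) [CommRing R]
    (n ℓ : ℕ) (hℓ : 1 ≤ ℓ) (L P : Fin ℓ → MvPolynomial (Fin (n + 1)) R)
    (hL : ∀ i, (L i).IsHomogeneous 1) (hP : ∀ i, (P i).IsHomogeneous 1) :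
    ∃ M : Matrix (Fin ℓ) (Fin ℓ) (MvPolynomial (Fin (n + 1)) R),
      (∀ i j, (M i j).IsHomogeneous 1) ∧
      M.det = (∏ i, L i) + ∏ i, P i := by
  match ℓ, hℓ with
  | 1, _ =>
    refine ⟨Matrix.of fun _ _ => L 0 + P 0, fun i j => (hL 0).add (hP 0), ?_⟩
    simp [Matrix.det_fin_one]
  | (m + 2), _ =>
    refine ⟨Matrix.of fun i j : Fin (m + 2) =>
        if i = j then L i
        else if (j : ℕ) = (i : ℕ) + 1 then -(P i)
        else if i = Fin.last (m + 1) ∧ j = 0 then P (Fin.last (m + 1))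
        else 0, ?_, aux_det_bidiag m L P⟩
    intro i j
    simp only [Matrix.of_apply]
    split
    · exact hL i
    split
    · exact (hP i).neg
    split
    · exact hP _
    · exact isHomogeneous_zero _ _ _
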